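/- Suppose R_Y ⫫ (M, Y) | (X, A, R_M) and all conditional probabilities below are strictly between 0 and 1. Then odds(R_M = 0 | X, A, Y) / odds(R_M = 0 | X, A, Y, R_Y = 1) = P(R_Y = 1 | X, A, R_M = 1) / P(R_Y = 1 | X, A, R_M = 0). -/

import Mathlib

open scoped Classical

noncomputable def Pr {Ω : Type*} [Fintype Ω] (p : Ω → ℝ) (E : Ω → Prop) : ℝ :=
  ∑ ω, if E ω then p ω else 0

noncomputable def cPr {Ω : Type*} [Fintype Ω] (p : Ω → ℝ) (E F : Ω → Prop) : ℝ :=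
  Pr p (fun ω => E ω ∧ F ω) / Pr p F

noncomputable def odds {Ω : Type*} [Fintype Ω] (p : Ω → ℝ) (E F : Ω → Prop) : ℝ :=
  cPr p E F / cPr p (fun ω => ¬ E ω) F

theorem Pr_congr {Ω : Type*} [Fintype Ω] (p : Ω → ℝ) {E F : Ω → Prop}
    (h : ∀ ω, E ω ↔ F ω) : Pr p E = Pr p F :=
  Finset.sum_congr rfl fun ω _ => by simp [h ω]

theorem Pr_nonneg {Ω : Type*} [Fintype Ω] {p : Ω → ℝ} (hp : ∀ ω, 0 ≤ p ω) (E : Ω → Prop) :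
    0 ≤ Pr p E :=
  Finset.sum_nonneg fun ω _ => by by_cases h : E ω <;> simp [h, hp ω]

theorem Pr_mono {Ω : Type*} [Fintype Ω] {p : Ω → ℝ} (hp : ∀ ω, 0 ≤ p ω) {E F : Ω → Prop}
    (h : ∀ ω, E ω → F ω) : Pr p E ≤ Pr p F := by
  apply Finset.sum_le_sum
  intro ω _
  by_cases hE : E ω
  · simp [hE, h ω hE]
  · by_cases hF : F ω <;> simp [hE, hF, hp ω]

theorem Pr_split {Ω : Type*} [Fintype Ω] (p : Ω → ℝ) (Z : Ω → ℕ)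
    (hZ : ∀ ω, Z ω = 0 ∨ Z ω = 1) (E : Ω → Prop) :
    Pr p E = Pr p (fun ω => E ω ∧ Z ω = 0) + Pr p (fun ω => E ω ∧ Z ω = 1) := by
  unfold Pr
  rw [← Finset.sum_add_distrib]
  apply Finset.sum_congr rfl
  intro ω _
  rcases hZ ω with h | h <;> by_cases hE : E ω <;> simp [h, hE]

theorem Pr_fiber {Ω ℳ : Type*} [Fintype Ω] (p : Ω → ℝ) (M : Ω → ℳ) (E : Ω → Prop) :
    Pr p E = ∑ m ∈ Finset.univ.image M, Pr p (fun ω => M ω = m ∧ E ω) := by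
  unfold Pr
  rw [← Finset.sum_fiberwise_of_maps_to
    (fun ω _ => Finset.mem_image_of_mem M (Finset.mem_univ ω))
    (fun ω => if E ω then p ω else 0)]
  apply Finset.sum_congr rfl
  intro m _
  rw [Finset.sum_filter]
  apply Finset.sum_congr rfl
  intro ω _
  by_cases h : M ω = m <;> by_cases hE : E ω <;> simp [h, hE]

theorem cPr_mul {Ω : Type*} [Fintype Ω] (p : Ω → ℝ) (E F : Ω → Prop)
    (h : Pr p F ≠ 0) : cPr p E F * Pr p F = Pr p (fun ω => E ω ∧ F ω) :=
  div_mul_cancel₀ _ h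

/-- Key odds-tilting step in identification under Model S5. -/
theorem S5_odds_step
    {Ω 𝒳 𝒜 ℳ 𝒴 : Type*} [Fintype Ω]
    (p : Ω → ℝ) (hp : ∀ ω, 0 ≤ p ω) (hsum : ∑ ω, p ω = 1)
    (X : Ω → 𝒳) (A : Ω → 𝒜) (M : Ω → ℳ) (Y : Ω → 𝒴) (RM RY : Ω → ℕ)
    (hRM : ∀ ω, RM ω = 0 ∨ RM ω = 1) (hRY : ∀ ω, RY ω = 0 ∨ RY ω = 1)
    -- R_Y ⫫ (M, Y) ∣ (X, A, R_M)
    (h2 : ∀ (ry : ℕ) (m : ℳ) (y : 𝒴) (x : 𝒳) (a : 𝒜) (rm : ℕ),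
      0 < Pr p (fun ω => M ω = m ∧ Y ω = y ∧ X ω = x ∧ A ω = a ∧ RM ω = rm) →
      cPr p (fun ω => RY ω = ry)
          (fun ω => M ω = m ∧ Y ω = y ∧ X ω = x ∧ A ω = a ∧ RM ω = rm)
        = cPr p (fun ω => RY ω = ry) (fun ω => X ω = x ∧ A ω = a ∧ RM ω = rm)) :
    ∀ (x : 𝒳) (a : 𝒜) (y : 𝒴),
      (∀ r s : Fin 2, 0 < Pr p (fun ω => RM ω = (r : ℕ) ∧ RY ω = (s : ℕ) ∧
          X ω = x ∧ A ω = a ∧ Y ω = y)) →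
      odds p (fun ω => RM ω = 0) (fun ω => X ω = x ∧ A ω = a ∧ Y ω = y)
          / odds p (fun ω => RM ω = 0) (fun ω => X ω = x ∧ A ω = a ∧ Y ω = y ∧ RY ω = 1)
        = cPr p (fun ω => RY ω = 1) (fun ω => X ω = x ∧ A ω = a ∧ RM ω = 1)
          / cPr p (fun ω => RY ω = 1) (fun ω => X ω = x ∧ A ω = a ∧ RM ω = 0) := by
  intro x a y hpos
  -- basic positive quantities
  set P : ℕ → ℕ → ℝ := fun r s =>
    Pr p (fun ω => RM ω = r ∧ RY ω = s ∧ X ω = x ∧ A ω = a ∧ Y ω = y) with hPdef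
  have hP00 : 0 < P 0 0 := by simpa using hpos 0 0
  have hP01 : 0 < P 0 1 := by simpa using hpos 0 1
  have hP10 : 0 < P 1 0 := by simpa using hpos 1 0
  have hP11 : 0 < P 1 1 := by simpa using hpos 1 1
  -- N r = Pr(X,A,Y, RM = r)
  have hN : ∀ r : ℕ,
      Pr p (fun ω => X ω = x ∧ A ω = a ∧ Y ω = y ∧ RM ω = r) = P r 0 + P r 1 := by
    intro r
    rw [Pr_split p RY hRY (fun ω => X ω = x ∧ A ω = a ∧ Y ω = y ∧ RM ω = r)]
    congr 1 <;> exact Pr_congr p (fun ω => by tauto)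
  -- key: tilting via conditional independence
  have key : ∀ r : ℕ,
      Pr p (fun ω => RY ω = 1 ∧ (X ω = x ∧ A ω = a ∧ Y ω = y ∧ RM ω = r))
        = cPr p (fun ω => RY ω = 1) (fun ω => X ω = x ∧ A ω = a ∧ RM ω = r)
          * Pr p (fun ω => X ω = x ∧ A ω = a ∧ Y ω = y ∧ RM ω = r) := by
    intro r
    rw [Pr_fiber p M (fun ω => RY ω = 1 ∧ (X ω = x ∧ A ω = a ∧ Y ω = y ∧ RM ω = r)),
        Pr_fiber p M (fun ω => X ω = x ∧ A ω = a ∧ Y ω = y ∧ RM ω = r),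
        Finset.mul_sum]
    apply Finset.sum_congr rfl
    intro m _
    by_cases hm : 0 < Pr p (fun ω => M ω = m ∧ Y ω = y ∧ X ω = x ∧ A ω = a ∧ RM ω = r)
    · have hind := h2 1 m y x a r hm
      have e1 : Pr p (fun ω => M ω = m ∧ RY ω = 1 ∧ (X ω = x ∧ A ω = a ∧ Y ω = y ∧ RM ω = r))
          = Pr p (fun ω => RY ω = 1 ∧ (M ω = m ∧ Y ω = y ∧ X ω = x ∧ A ω = a ∧ RM ω = r)) :=
        Pr_congr p (fun ω => by tauto)
      rw [e1, ← cPr_mul p (fun ω => RY ω = 1)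
          (fun ω => M ω = m ∧ Y ω = y ∧ X ω = x ∧ A ω = a ∧ RM ω = r) hm.ne', hind]
      congr 1
      exact Pr_congr p (fun ω => by tauto)
    · have h0 : Pr p (fun ω => M ω = m ∧ Y ω = y ∧ X ω = x ∧ A ω = a ∧ RM ω = r) = 0 :=
        le_antisymm (not_lt.1 hm) (Pr_nonneg hp _)
      have hz1 : Pr p (fun ω => M ω = m ∧ RY ω = 1 ∧ (X ω = x ∧ A ω = a ∧ Y ω = y ∧ RM ω = r))
          = 0 :=
        le_antisymm (h0 ▸ Pr_mono hp (fun ω => by tauto)) (Pr_nonneg hp _)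
      have hz2 : Pr p (fun ω => M ω = m ∧ (X ω = x ∧ A ω = a ∧ Y ω = y ∧ RM ω = r)) = 0 :=
        le_antisymm (h0 ▸ Pr_mono hp (fun ω => by tauto)) (Pr_nonneg hp _)
      rw [hz1, hz2, mul_zero]
  -- identify conditional probabilities
  have hq : ∀ r : ℕ, 0 < P r 0 + P r 1 →
      cPr p (fun ω => RY ω = 1) (fun ω => X ω = x ∧ A ω = a ∧ RM ω = r)
        = P r 1 / (P r 0 + P r 1) := by
    intro r hNrpos
    have hNr : P r 0 + P r 1 = Pr p (fun ω => X ω = x ∧ A ω = a ∧ Y ω = y ∧ RM ω = r) :=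
      (hN r).symm
    have hPr1 : Pr p (fun ω => RY ω = 1 ∧ (X ω = x ∧ A ω = a ∧ Y ω = y ∧ RM ω = r))
        = P r 1 := Pr_congr p (fun ω => by tauto)
    have hk := key r
    rw [hPr1, ← hNr] at hk
    rw [eq_div_iff hNrpos.ne']
    exact hk.symm
  have hN0 : 0 < P 0 0 + P 0 1 := by positivity
  have hN1 : 0 < P 1 0 + P 1 1 := by positivity
  -- compute the two odds
  have hdivdiv : ∀ a b c : ℝ, c ≠ 0 → (a / c) / (b / c) = a / b := by
    intro a b c hc
    field_simp
  have hF : Pr p (fun ω => X ω = x ∧ A ω = a ∧ Y ω = y)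
      = (P 0 0 + P 0 1) + (P 1 0 + P 1 1) := by
    rw [Pr_split p RM hRM (fun ω => X ω = x ∧ A ω = a ∧ Y ω = y)]
    congr 1
    · rw [← hN 0]; exact Pr_congr p (fun ω => by tauto)
    · rw [← hN 1]; exact Pr_congr p (fun ω => by tauto)
  have hFne : Pr p (fun ω => X ω = x ∧ A ω = a ∧ Y ω = y) ≠ 0 := by
    rw [hF]; positivity
  have hA0 : Pr p (fun ω => RM ω = 0 ∧ (X ω = x ∧ A ω = a ∧ Y ω = y)) = P 0 0 + P 0 1 := by
    rw [Pr_split p RY hRY (fun ω => RM ω = 0 ∧ (X ω = x ∧ A ω = a ∧ Y ω = y))]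
    congr 1 <;> exact Pr_congr p (fun ω => by tauto)
  have hA1 : Pr p (fun ω => ¬ RM ω = 0 ∧ (X ω = x ∧ A ω = a ∧ Y ω = y)) = P 1 0 + P 1 1 := by
    rw [Pr_split p RY hRY (fun ω => ¬ RM ω = 0 ∧ (X ω = x ∧ A ω = a ∧ Y ω = y))]
    congr 1 <;>
      exact Pr_congr p (fun ω => by rcases hRM ω with h | h <;> simp [h] <;> tauto)
  have hodds1 : odds p (fun ω => RM ω = 0) (fun ω => X ω = x ∧ A ω = a ∧ Y ω = y)
      = (P 0 0 + P 0 1) / (P 1 0 + P 1 1) := by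
    unfold odds cPr
    rw [hA0, hA1]
    exact hdivdiv _ _ _ hFne
  have hF' : Pr p (fun ω => X ω = x ∧ A ω = a ∧ Y ω = y ∧ RY ω = 1) = P 0 1 + P 1 1 := by
    rw [Pr_split p RM hRM (fun ω => X ω = x ∧ A ω = a ∧ Y ω = y ∧ RY ω = 1)]
    congr 1 <;> exact Pr_congr p (fun ω => by tauto)
  have hF'ne : Pr p (fun ω => X ω = x ∧ A ω = a ∧ Y ω = y ∧ RY ω = 1) ≠ 0 := by
    rw [hF']; positivity
  have hB0 : Pr p (fun ω => RM ω = 0 ∧ (X ω = x ∧ A ω = a ∧ Y ω = y ∧ RY ω = 1))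
      = P 0 1 := Pr_congr p (fun ω => by tauto)
  have hB1 : Pr p (fun ω => ¬ RM ω = 0 ∧ (X ω = x ∧ A ω = a ∧ Y ω = y ∧ RY ω = 1))
      = P 1 1 := Pr_congr p (fun ω => by rcases hRM ω with h | h <;> simp [h] <;> tauto)
  have hodds2 : odds p (fun ω => RM ω = 0)
        (fun ω => X ω = x ∧ A ω = a ∧ Y ω = y ∧ RY ω = 1)
      = P 0 1 / P 1 1 := by
    unfold odds cPr
    rw [hB0, hB1]
    exact hdivdiv _ _ _ hF'ne
  rw [hodds1, hodds2, hq 0 hN0, hq 1 hN1]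
  field_simp
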